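/- Under the hypothesis that G_j(x^{k+1}) ≤ G_j(x^k) + t_k⟨∇G_j(x^k), d^k⟩ + t_k(γ/2)‖d^k‖² with x^{k+1} = x^k + t_k d^k, d^k = p_α(x^k) - x^k, t_k ∈ (0,1], for every x ∈ dom(F): ‖x^{k+1} - x‖² ≤ ‖x^k - x‖² + 2α(F_j(x^k) - F_j(x^{k+1})) + 2αt_k max_{i=1,…,m}(F_i(x) - F_i(x^k)) - 2αt_k(1/α - γ/2)‖d^k‖² + t_k²‖d^k‖². -/

import Mathlib

open RealInnerProductSpace

/-- Key inequality: under the sufficient-decrease condition for index `j`, for every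
`x ∈ dom F`,
`‖x^{k+1} - x‖² ≤ ‖x^k - x‖² + 2α(F_j(x^k) - F_j(x^{k+1})) + 2αt_k max_i (F_i(x) - F_i(x^k))
  - 2αt_k(1/α - γ/2)‖d^k‖² + t_k²‖d^k‖²`. -/
lemma grad_ineq_aux {E : Type*} [NormedAddCommGroup E] [InnerProductSpace ℝ E]
    [CompleteSpace E] {f : E → ℝ} {g y : E}
    (hconv : ConvexOn ℝ Set.univ f) (hgrad : HasGradientAt f g y) (v : E) :
    ⟪g, v - y⟫ ≤ f v - f y := by
  set q : ℝ → ℝ := fun t => f (t • (v - y) + y) with hq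
  have hqconv : ConvexOn ℝ Set.univ q := by
    have h := hconv.comp_affineMap (AffineMap.lineMap y v)
    rw [Set.preimage_univ] at h
    have hfq : q = f ∘ AffineMap.lineMap y v := by
      funext t
      simp [AffineMap.lineMap_apply, q]
    rw [hfq]
    exact h
  have hline : HasDerivAt (fun t : ℝ => t • (v - y) + y) (v - y) 0 := by
    simpa using ((hasDerivAt_id (0:ℝ)).smul_const (v - y)).add_const y
  have hfd : HasFDerivAt f (InnerProductSpace.toDual ℝ E g) ((0:ℝ) • (v - y) + y) := by
    simpa using hgrad.hasFDerivAt
  have hd : HasDerivAt q ⟪g, v - y⟫ 0 := by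
    simpa [q, Function.comp_def, InnerProductSpace.toDual_apply_apply] using hfd.comp_hasDerivAt 0 hline
  have hs := hqconv.le_slope_of_hasDerivAt (Set.mem_univ 0) (Set.mem_univ 1) zero_lt_one hd
  have : slope q 0 1 = f v - f y := by
    simp [slope_def_field, q]
  linarith [hs.trans_eq this]

theorem key_fejer_inequality {n m : ℕ} (hm : 0 < m)
    (G : Fin m → EuclideanSpace ℝ (Fin n) → ℝ)
    (G' : Fin m → EuclideanSpace ℝ (Fin n) → EuclideanSpace ℝ (Fin n))
    (H : Fin m → EuclideanSpace ℝ (Fin n) → ℝ)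
    (dom : Set (EuclideanSpace ℝ (Fin n)))
    (hGconv : ∀ j, ConvexOn ℝ Set.univ (G j))
    (hGdiff : ∀ j x, HasGradientAt (G j) (G' j x) x)
    (hHconv : ∀ j, ConvexOn ℝ dom (H j))
    (hdomconv : Convex ℝ dom)
    (α γ : ℝ) (hα : 0 < α) (hγ : 0 < γ)
    (xk p : EuclideanSpace ℝ (Fin n)) (hxk : xk ∈ dom) (hp : p ∈ dom)
    (hpmin : IsMinOn
      (fun u => (⨆ i, (⟪G' i xk, u - xk⟫ + H i u - H i xk)) + 1 / (2 * α) * ‖u - xk‖ ^ 2)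
      dom p)
    (tk : ℝ) (htk0 : 0 < tk) (htk1 : tk ≤ 1)
    (j : Fin m)
    (hdec : G j (xk + tk • (p - xk)) ≤
      G j xk + tk * ⟪G' j xk, p - xk⟫ + tk * (γ / 2) * ‖p - xk‖ ^ 2) :
    ∀ x ∈ dom,
      ‖(xk + tk • (p - xk)) - x‖ ^ 2 ≤ ‖xk - x‖ ^ 2
        + 2 * α * ((G j xk + H j xk) - (G j (xk + tk • (p - xk)) + H j (xk + tk • (p - xk))))
        + 2 * α * tk * (⨆ i, ((G i x + H i x) - (G i xk + H i xk)))
        - 2 * α * tk * (1 / α - γ / 2) * ‖p - xk‖ ^ 2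
        + tk ^ 2 * ‖p - xk‖ ^ 2 := by
  haveI : Nonempty (Fin m) := ⟨⟨0, hm⟩⟩
  intro x hx
  set ψ : EuclideanSpace ℝ (Fin n) → ℝ :=
    fun u => ⨆ i, (⟪G' i xk, u - xk⟫ + H i u - H i xk) with hψdef
  have hbdd : ∀ u : EuclideanSpace ℝ (Fin n),
      BddAbove (Set.range fun i => ⟪G' i xk, u - xk⟫ + H i u - H i xk) :=
    fun u => Set.Finite.bddAbove (Set.finite_range _)
  -- cleared-denominator minimality
  have hmin2 : ∀ u ∈ dom, 2*α*ψ p + ‖p - xk‖^2 ≤ 2*α*ψ u + ‖u - xk‖^2 := by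
    intro u hu
    have h : ψ p + 1/(2*α)*‖p - xk‖^2 ≤ ψ u + 1/(2*α)*‖u - xk‖^2 :=
      isMinOn_iff.mp hpmin u hu
    have e : ∀ r : ℝ, 2*α*(1/(2*α)*r) = r := fun r => by field_simp
    have h2 := mul_le_mul_of_nonneg_left h (by positivity : (0:ℝ) ≤ 2*α)
    rw [mul_add, mul_add, e, e] at h2
    exact h2
  -- convexity of ψ along segments
  have ψconv : ∀ t : ℝ, 0 ≤ t → t ≤ 1 → ∀ u ∈ dom, ∀ v ∈ dom,
      ψ ((1-t)•u + t•v) ≤ (1-t)*ψ u + t*ψ v := by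
    intro t ht0 ht1 u hu v hv
    simp only [hψdef]
    refine ciSup_le fun i => ?_
    have hH0 := (hHconv i).2 hu hv (show (0:ℝ) ≤ 1 - t by linarith) ht0 (by ring)
    have hH : H i ((1-t)•u + t•v) ≤ (1-t)*H i u + t*H i v := by
      simpa [smul_eq_mul] using hH0
    have e : ((1-t)•u + t•v) - xk = (1-t)•(u-xk) + t•(v-xk) := by module
    have hin : ⟪G' i xk, ((1-t)•u + t•v) - xk⟫
        = (1-t)*⟪G' i xk, u-xk⟫ + t*⟪G' i xk, v-xk⟫ := by
      rw [e, inner_add_right, real_inner_smul_right, real_inner_smul_right]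
    have hu' : ⟪G' i xk, u - xk⟫ + H i u - H i xk
        ≤ ⨆ i', (⟪G' i' xk, u - xk⟫ + H i' u - H i' xk) := le_ciSup (hbdd u) i
    have hv' : ⟪G' i xk, v - xk⟫ + H i v - H i xk
        ≤ ⨆ i', (⟪G' i' xk, v - xk⟫ + H i' v - H i' xk) := le_ciSup (hbdd v) i
    have hu'' := mul_le_mul_of_nonneg_left hu' (by linarith : (0:ℝ) ≤ 1-t)
    have hv'' := mul_le_mul_of_nonneg_left hv' ht0
    rw [hin]
    linarith [hH, hu'', hv'']
  -- strong minimality inequality at x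
  have claim3 : 2*α*ψ p + ‖p - xk‖^2 + ‖x - p‖^2 ≤ 2*α*ψ x + ‖x - xk‖^2 := by
    have main : ∀ l ∈ Set.Ioc (0:ℝ) 1,
        (1-l)*‖x - p‖^2 ≤ 2*α*ψ x + ‖x - xk‖^2 - 2*α*ψ p - ‖p - xk‖^2 := by
      intro l hl
      have hzdom : (1-l)•p + l•x ∈ dom :=
        hdomconv hp hx (by linarith [hl.2]) hl.1.le (by ring)
      have h1 := hmin2 _ hzdom
      have h2 := ψconv l hl.1.le hl.2 p hp x hx
      have h2' := mul_le_mul_of_nonneg_left h2 (by positivity : (0:ℝ) ≤ 2*α)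
      have eB : ‖x - xk‖^2 = ‖p - xk‖^2 + 2*⟪p - xk, x - p⟫ + ‖x - p‖^2 := by
        have e2 : x - xk = (p - xk) + (x - p) := by module
        rw [e2, norm_add_sq_real]
      have hid : ‖((1-l)•p + l•x) - xk‖^2
          = (1-l)*‖p - xk‖^2 + l*‖x - xk‖^2 - l*(1-l)*‖x - p‖^2 := by
        have e : ((1-l)•p + l•x) - xk = (p - xk) + l•(x - p) := by module
        rw [e, norm_add_sq_real, real_inner_smul_right, norm_smul, Real.norm_eq_abs,
          mul_pow, sq_abs, eB]
        ring
      rw [hid] at h1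
      have comb : l*((1-l)*‖x - p‖^2)
          ≤ l*(2*α*ψ x + ‖x - xk‖^2 - 2*α*ψ p - ‖p - xk‖^2) := by nlinarith [h1, h2']
      exact le_of_mul_le_mul_left comb hl.1
    have hten : Filter.Tendsto (fun l : ℝ => (1-l)*‖x - p‖^2)
        (nhdsWithin 0 (Set.Ioi 0)) (nhds ((1-0)*‖x - p‖^2)) :=
      (((continuous_const.sub continuous_id).mul continuous_const).tendsto 0).mono_left
        nhdsWithin_le_nhds
    have hev : ∀ᶠ l in nhdsWithin (0:ℝ) (Set.Ioi 0),
        (1-l)*‖x - p‖^2 ≤ 2*α*ψ x + ‖x - xk‖^2 - 2*α*ψ p - ‖p - xk‖^2 :=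
      Filter.eventually_of_mem
        (Ioc_mem_nhdsGT_of_mem (by simp : (0:ℝ) ∈ Set.Ico (0:ℝ) 1)) main
    have hlim := le_of_tendsto hten hev
    norm_num at hlim
    linarith
  -- ψ x ≤ sup of F-differences
  have hψx : ψ x ≤ ⨆ i, ((G i x + H i x) - (G i xk + H i xk)) := by
    simp only [hψdef]
    refine ciSup_le fun i => ?_
    have hg := grad_ineq_aux (hGconv i) (hGdiff i xk) x
    have hle : (G i x + H i x) - (G i xk + H i xk)
        ≤ ⨆ i', ((G i' x + H i' x) - (G i' xk + H i' xk)) :=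
      le_ciSup (f := fun i' => (G i' x + H i' x) - (G i' xk + H i' xk))
        (Set.Finite.bddAbove (Set.finite_range _)) i
    linarith
  -- sufficient decrease combined with H convexity
  have hψp_lb : ⟪G' j xk, p - xk⟫ + H j p - H j xk ≤ ψ p := le_ciSup (hbdd p) j
  have hHj : H j (xk + tk•(p - xk)) ≤ (1-tk)*H j xk + tk*H j p := by
    have exk : xk + tk•(p - xk) = (1-tk)•xk + tk•p := by module
    rw [exk]
    exact (hHconv j).2 hxk hp (by linarith) htk0.le (by ring)
  have ha : G j (xk + tk•(p - xk)) + H j (xk + tk•(p - xk))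
      ≤ (G j xk + H j xk) + tk*ψ p + tk*(γ/2)*‖p - xk‖^2 := by
    have h := mul_le_mul_of_nonneg_left hψp_lb htk0.le
    linarith [hdec, hHj, h]
  -- norm expansions
  have e1 : ‖(xk + tk•(p - xk)) - x‖^2
      = ‖xk - x‖^2 + 2*(tk*⟪xk - x, p - xk⟫) + tk^2*‖p - xk‖^2 := by
    have e : (xk + tk•(p - xk)) - x = (xk - x) + tk•(p - xk) := by module
    rw [e, norm_add_sq_real, real_inner_smul_right, norm_smul, Real.norm_eq_abs,
      mul_pow, sq_abs]
  have e2 : ‖x - p‖^2 = ‖x - xk‖^2 + 2*⟪xk - x, p - xk⟫ + ‖p - xk‖^2 := by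
    have e : x - p = (x - xk) - (p - xk) := by module
    have hip : ⟪x - xk, p - xk⟫ = -⟪xk - x, p - xk⟫ := by
      rw [← neg_sub xk x, inner_neg_left]
    rw [e, norm_sub_sq_real, hip]
    ring
  have e3 : ‖x - xk‖^2 = ‖xk - x‖^2 := by rw [norm_sub_rev]
  have claim3' : 2*α*ψ p + 2*‖p - xk‖^2 + 2*⟪xk - x, p - xk⟫ ≤ 2*α*ψ x := by
    linarith [claim3, e2, e3]
  -- final assembly
  have hrw : 2*α*tk*(1/α - γ/2)*‖p - xk‖^2
      = 2*tk*‖p - xk‖^2 - α*tk*γ*‖p - xk‖^2 := by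
    field_simp
  rw [e1, hrw]
  have s1 := mul_le_mul_of_nonneg_left ha (by positivity : (0:ℝ) ≤ 2*α)
  have s2 := mul_le_mul_of_nonneg_left hψx (by positivity : (0:ℝ) ≤ 2*α*tk)
  have s3 := mul_le_mul_of_nonneg_left claim3' htk0.le
  linarith [s1, s2, s3]
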